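/- Let D be a DAG and let u, v be distinct non-adjacent nodes of D. Then u and v are d-separated either by the set of parents of u or by the set of parents of v. -/

import Mathlib

/-- Adjacency: an edge in either direction. -/
def Adj {V : Type*} (E : V → V → Prop) (u v : V) : Prop := E u v ∨ E v u

/-- A directed graph is acyclic if no node lies on a directed cycle. -/
def Acyclic {V : Type*} (E : V → V → Prop) : Prop := ∀ v, ¬ Relation.TransGen E v v

/-- `Desc E v w` : `w` is a descendant of `v` (including `v` itself). -/
def Desc {V : Type*} (E : V → V → Prop) (v w : V) : Prop := Relation.ReflTransGen E v w

/-- A path between `u` and `v`: a nonempty list of distinct, consecutively adjacent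
nodes starting at `u` and ending at `v`. -/
def IsPath {V : Type*} (E : V → V → Prop) (u v : V) (p : List V) : Prop :=
  p.Nodup ∧ p.Chain' (Adj E) ∧ p.head? = some u ∧ p.getLast? = some v

/-- The node at (interior) position `i` of the path `p` is a collider:
both path edges point into it. -/
def ColliderAt {V : Type*} (E : V → V → Prop) (p : List V) (i : ℕ) : Prop :=
  0 < i ∧ ∃ a w b, p[i-1]? = some a ∧ p[i]? = some w ∧ p[i+1]? = some b ∧ E a w ∧ E b w

/-- A path is blocked by `S` if it contains an interior non-collider in `S`, or a
collider none of whose descendants (including itself) is in `S`. -/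
def Blocked {V : Type*} (E : V → V → Prop) (S : Set V) (p : List V) : Prop :=
  (∃ i w, 0 < i ∧ i + 1 < p.length ∧ p[i]? = some w ∧ ¬ ColliderAt E p i ∧ w ∈ S) ∨
  (∃ i w, ColliderAt E p i ∧ p[i]? = some w ∧ ∀ d, Desc E w d → d ∉ S)

/-- `S` d-separates `u` and `v`: every path between them is blocked by `S`. -/
def DSep {V : Type*} (E : V → V → Prop) (S : Set V) (u v : V) : Prop :=
  ∀ p, IsPath E u v p → Blocked E S p

section Aux

variable {V : Type*} {E : V → V → Prop}

lemma colliderAt_reverse {p : List V} {i : ℕ} (h : ColliderAt E p i) :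
    ColliderAt E p.reverse (p.length - 1 - i) := by
  obtain ⟨hpos, a, w, b, ha, hw, hb, hea, heb⟩ := h
  have hi : i + 1 < p.length := (List.getElem?_eq_some_iff.mp hb).1
  refine ⟨by omega, b, w, a, ?_, ?_, ?_, heb, hea⟩
  · rw [List.getElem?_reverse (by omega),
      show p.length - 1 - (p.length - 1 - i - 1) = i + 1 by omega]
    exact hb
  · rw [List.getElem?_reverse (by omega),
      show p.length - 1 - (p.length - 1 - i) = i by omega]
    exact hw
  · rw [List.getElem?_reverse (by omega),
      show p.length - 1 - (p.length - 1 - i + 1) = i - 1 by omega]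
    exact ha

lemma blocked_reverse {S : Set V} {p : List V} (h : Blocked E S p) : Blocked E S p.reverse := by
  rcases h with ⟨i, w, hpos, hilen, hw, hnc, hwS⟩ | ⟨i, w, hc, hw, hd⟩
  · left
    refine ⟨p.length - 1 - i, w, by omega, ?_, ?_, ?_, hwS⟩
    · rw [List.length_reverse]; omega
    · rw [List.getElem?_reverse (by omega),
        show p.length - 1 - (p.length - 1 - i) = i by omega]
      exact hw
    · intro hc
      have h2 := colliderAt_reverse hc
      rw [List.reverse_reverse, List.length_reverse,
        show p.length - 1 - (p.length - 1 - i) = i by omega] at h2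
      exact hnc h2
  · right
    have hi : i + 1 < p.length := by
      obtain ⟨_, a, w', b, ha, hw', hb, _, _⟩ := hc
      exact (List.getElem?_eq_some_iff.mp hb).1
    have hpos : 0 < i := hc.1
    refine ⟨p.length - 1 - i, w, colliderAt_reverse hc, ?_, hd⟩
    rw [List.getElem?_reverse (by omega),
      show p.length - 1 - (p.length - 1 - i) = i by omega]
    exact hw

lemma isPath_reverse {u v : V} {p : List V} (hp : IsPath E u v p) : IsPath E v u p.reverse := by
  obtain ⟨hnd, hch, hhd, hlast⟩ := hp
  refine ⟨List.nodup_reverse.mpr hnd, ?_, ?_, ?_⟩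
  · rw [List.Chain', List.isChain_reverse]
    exact (show List.IsChain _ p from hch).imp fun a b h => h.symm
  · rw [List.head?_reverse]; exact hlast
  · rw [List.getLast?_reverse]; exact hhd

lemma dsep_parents (hD : Acyclic E) {u v : V} (huv : u ≠ v) (hnadj : ¬ Adj E u v)
    (hnd : ¬ Desc E u v) : DSep E {w | E w u} u v := by
  intro p hp
  obtain ⟨hnodup, hch, hhd, hlast⟩ := hp
  rw [List.head?_eq_getElem?] at hhd
  rw [List.getLast?_eq_getElem?] at hlast
  obtain ⟨h0, hu⟩ := List.getElem?_eq_some_iff.mp hhd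
  obtain ⟨hvlt, hv⟩ := List.getElem?_eq_some_iff.mp hlast
  have hchain : ∀ i (h : i + 1 < p.length), Adj E (p[i]'(by omega)) (p[i+1]'h) := by
    have := List.isChain_iff_getElem.mp hch
    intro i h
    simpa using this i (by omega)
  have hn2 : 2 ≤ p.length := by
    by_contra h
    have hl : p.length - 1 = 0 := by omega
    rw [hl, hhd] at hlast
    exact huv (Option.some_inj.mp hlast)
  have hadj01 : Adj E u (p[1]'(by omega)) := by
    have := hchain 0 (by omega)
    rwa [hu] at this
  rcases hadj01 with heuw | hewu
  · -- edge out of u: find the last index reachable by a directed path from u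
    classical
    set Q : ℕ → Prop := fun k => ∀ i, i + 1 ≤ k → ∀ (hk : i + 1 < p.length),
      E (p[i]'(by omega)) (p[i+1]'hk) with hQ
    have hQ0 : Q 0 := fun i h _ => by omega
    have hQ1 : Q 1 := by
      intro i h hk
      have : i = 0 := by omega
      subst this
      simpa [hu] using heuw
    set j := Nat.findGreatest Q (p.length - 1) with hj
    have hQj : Q j := Nat.findGreatest_spec (by omega : (0:ℕ) ≤ p.length - 1) hQ0
    have hj1 : 1 ≤ j := Nat.le_findGreatest (by omega) hQ1
    have hjle : j ≤ p.length - 1 := Nat.findGreatest_le _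
    have hdesc : ∀ k (hk : k < p.length), k ≤ j → Desc E u (p[k]'hk) := by
      intro k
      induction k with
      | zero =>
        intro hk _
        rw [hu]
        exact Relation.ReflTransGen.refl
      | succ k ih =>
        intro hk hkj
        exact Relation.ReflTransGen.tail (ih (by omega) (by omega))
          (hQj k (by omega) (by omega))
    have hjlt : j < p.length - 1 := by
      rcases lt_or_eq_of_le hjle with h | h
      · exact h
      · exfalso
        apply hnd
        have := hdesc (p.length - 1) (by omega) (by omega)
        rwa [hv] at this
    have hnQ : ¬ Q (j + 1) :=
      Nat.findGreatest_is_greatest (P := Q) (k := j + 1) (n := p.length - 1) (by omega) (by omega)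
    have hback : E (p[j+1]'(by omega)) (p[j]'(by omega)) := by
      have hnf : ¬ E (p[j]'(by omega)) (p[j+1]'(by omega)) := by
        intro hf
        apply hnQ
        intro i hi hk
        rcases Nat.lt_or_ge (i + 1) (j + 1) with h | h
        · exact hQj i (by omega) hk
        · have : i = j := by omega
          subst this
          exact hf
      rcases hchain j (by omega) with h | h
      · exact absurd h hnf
      · exact h
    right
    refine ⟨j, p[j]'(by omega), ⟨by omega, p[j-1]'(by omega), p[j]'(by omega),
      p[j+1]'(by omega), List.getElem?_eq_getElem _, List.getElem?_eq_getElem _,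
      List.getElem?_eq_getElem _, ?_, hback⟩, List.getElem?_eq_getElem _, ?_⟩
    · have := hQj (j - 1) (by omega) (by omega)
      convert this using 2; omega
    · intro d hdd hdS
      apply hD u
      exact Relation.TransGen.trans_right
        ((hdesc j (by omega) le_rfl).trans hdd) (Relation.TransGen.single hdS)
  · -- edge into u : p[1] is a parent of u and a non-collider
    have hn3 : 3 ≤ p.length := by
      by_contra h
      have hl : p.length - 1 = 1 := by omega
      rw [hl, List.getElem?_eq_getElem (by omega)] at hlast
      have hv1 : p[1]'(by omega) = v := Option.some_inj.mp hlast
      rw [hv1] at hewu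
      exact hnadj (Or.inr hewu)
    left
    refine ⟨1, p[1]'(by omega), one_pos, by omega, List.getElem?_eq_getElem _, ?_, hewu⟩
    rintro ⟨-, a, w', b, ha, hw', hb, hea, -⟩
    have ha' : a = u := by
      rw [List.getElem?_eq_getElem h0] at ha
      rw [← Option.some_inj.mp ha, hu]
    have hw'' : w' = p[1]'(by omega) := by
      rw [List.getElem?_eq_getElem (by omega)] at hw'
      exact (Option.some_inj.mp hw').symm
    rw [ha', hw''] at hea
    exact hD u (Relation.TransGen.head hea (Relation.TransGen.single hewu))

end Aux

/-- Distinct non-adjacent nodes of a DAG are d-separated by the parents of one of them. -/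
theorem nonadjacent_dsep_by_parents {V : Type*} (E : V → V → Prop) (hD : Acyclic E)
    (u v : V) (huv : u ≠ v) (hnadj : ¬ Adj E u v) :
    DSep E {w | E w u} u v ∨ DSep E {w | E w v} u v := by
  by_cases hdesc : Desc E u v
  · right
    have hnd' : ¬ Desc E v u := by
      intro h
      rcases Relation.ReflTransGen.cases_head hdesc with heq | ⟨c, huc, hcv⟩
      · exact huv heq
      · exact hD u (Relation.TransGen.head' huc (hcv.trans h))
    have h := dsep_parents hD huv.symm (fun h => hnadj h.symm) hnd'
    intro p hp
    have hrev := blocked_reverse (h p.reverse (isPath_reverse hp))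
    rwa [List.reverse_reverse] at hrev
  · left
    exact dsep_parents hD huv hnadj hdesc
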